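/- For every integer m ≥ 1 and every real x with sin(mx/2) ≠ 0, Σ_{s=0}^{m−1} 1/sin²((x + 2πs/m)/2) = m²/sin²(mx/2). -/

import Mathlib

open Finset Real

section Aux

open Polynomial Complex

private lemma prod_sub_nthRoots (m : ℕ) (hm : 0 < m) (z : ℂ) :
    ∏ ζ ∈ nthRootsFinset m (1 : ℂ), (z - ζ) = z ^ m - 1 := by
  have hprim := Complex.isPrimitiveRoot_exp m hm.ne'
  have h := congrArg (Polynomial.eval z) (X_pow_sub_one_eq_prod hm hprim)
  simpa [eval_prod] using h.symm

private lemma sub_root_ne (m : ℕ) (hm : 0 < m) {z : ℂ} (hz : z ^ m ≠ 1) {ζ : ℂ}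
    (hζ : ζ ∈ nthRootsFinset m (1 : ℂ)) : z - ζ ≠ 0 := by
  intro h
  rw [sub_eq_zero] at h
  exact hz (h ▸ (mem_nthRootsFinset hm (1 : ℂ)).1 hζ)

private lemma sum_inv_sub (m : ℕ) (hm : 0 < m) (z : ℂ) (hz : z ^ m ≠ 1) :
    ∑ ζ ∈ nthRootsFinset m (1 : ℂ), (z - ζ)⁻¹ = m * z ^ (m - 1) / (z ^ m - 1) := by
  classical
  have hne : z ^ m - 1 ≠ 0 := sub_ne_zero.2 hz
  have hP : (fun w : ℂ => ∏ ζ ∈ nthRootsFinset m (1 : ℂ), (w - ζ)) = fun w => w ^ m - 1 :=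
    funext fun w => prod_sub_nthRoots m hm w
  have h1 : HasDerivAt (fun w : ℂ => ∏ ζ ∈ nthRootsFinset m (1 : ℂ), (w - ζ))
      (∑ ζ ∈ nthRootsFinset m (1 : ℂ), (∏ ζ' ∈ (nthRootsFinset m (1 : ℂ)).erase ζ, (z - ζ')) • (1:ℂ)) z :=
    HasDerivAt.fun_finsetProd (fun ζ _ => (hasDerivAt_id z).sub_const ζ)
  have h2 : HasDerivAt (fun w : ℂ => w ^ m - 1) ((m : ℂ) * z ^ (m - 1)) z :=
    (hasDerivAt_pow m z).sub_const 1
  rw [hP] at h1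
  have hd := h2.unique h1
  simp only [smul_eq_mul, mul_one] at hd
  have hkey : ∀ ζ ∈ nthRootsFinset m (1 : ℂ),
      ∏ ζ' ∈ (nthRootsFinset m (1 : ℂ)).erase ζ, (z - ζ') = (z ^ m - 1) * (z - ζ)⁻¹ := by
    intro ζ hζ
    have h1' := Finset.mul_prod_erase _ (fun ζ' => z - ζ') hζ
    rw [prod_sub_nthRoots m hm z] at h1'
    field_simp [sub_root_ne m hm hz hζ]
    linear_combination h1'
  rw [Finset.sum_congr rfl hkey, ← Finset.mul_sum] at hd
  field_simp [hne] at hd ⊢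
  linear_combination -hd

private lemma sum_inv_sq (k : ℕ) (z : ℂ) (hz : z ^ (k + 2) ≠ 1) :
    ∑ ζ ∈ nthRootsFinset (k + 2) (1 : ℂ), ((z - ζ) ^ 2)⁻¹ =
      ((k + 2 : ℂ) ^ 2 * z ^ (2 * k + 2) - (k + 2) * (k + 1) * z ^ k * (z ^ (k + 2) - 1)) /
        (z ^ (k + 2) - 1) ^ 2 := by
  classical
  have hm : 0 < k + 2 := by omega
  have hne : z ^ (k + 2) - 1 ≠ 0 := sub_ne_zero.2 hz
  set U : Set ℂ := {w : ℂ | w ^ (k + 2) ≠ 1} with hUdef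
  have hU : IsOpen U := by
    have : U = (fun w : ℂ => w ^ (k + 2)) ⁻¹' ({1}ᶜ) := rfl
    rw [this]
    exact IsOpen.preimage (continuous_pow (k + 2)) isOpen_compl_singleton
  have hzU : z ∈ U := hz
  have hf : HasDerivAt (fun w : ℂ => ∑ ζ ∈ nthRootsFinset (k + 2) (1 : ℂ), (w - ζ)⁻¹)
      (∑ ζ ∈ nthRootsFinset (k + 2) (1 : ℂ), -1 / (z - ζ) ^ 2) z := by
    apply HasDerivAt.fun_sum
    intro ζ hζ
    simpa [Pi.inv_def] using ((hasDerivAt_id z).sub_const ζ).inv (sub_root_ne (k + 2) hm hz hζ)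
  have hu : HasDerivAt (fun w : ℂ => (k + 2 : ℂ) * w ^ (k + 1))
      ((k + 2 : ℂ) * ((k + 1 : ℂ) * z ^ k)) z := by
    simpa using (hasDerivAt_pow (k + 1) z).const_mul (k + 2 : ℂ)
  have hv : HasDerivAt (fun w : ℂ => w ^ (k + 2) - 1) ((k + 2 : ℂ) * z ^ (k + 1)) z := by
    simpa using (hasDerivAt_pow (k + 2) z).sub_const 1
  have hg : HasDerivAt (fun w : ℂ => (k + 2 : ℂ) * w ^ (k + 1) / (w ^ (k + 2) - 1))
      (((k + 2 : ℂ) * ((k + 1 : ℂ) * z ^ k) * (z ^ (k + 2) - 1) -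
        (k + 2 : ℂ) * z ^ (k + 1) * ((k + 2 : ℂ) * z ^ (k + 1))) / (z ^ (k + 2) - 1) ^ 2) z :=
    hu.div hv hne
  have hev : (fun w : ℂ => ∑ ζ ∈ nthRootsFinset (k + 2) (1 : ℂ), (w - ζ)⁻¹) =ᶠ[nhds z]
      (fun w : ℂ => (k + 2 : ℂ) * w ^ (k + 1) / (w ^ (k + 2) - 1)) := by
    filter_upwards [hU.mem_nhds hzU] with w hw
    have := sum_inv_sub (k + 2) hm w hw
    simpa using this
  have hf2 : HasDerivAt (fun w : ℂ => ∑ ζ ∈ nthRootsFinset (k + 2) (1 : ℂ), (w - ζ)⁻¹)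
      (((k + 2 : ℂ) * ((k + 1 : ℂ) * z ^ k) * (z ^ (k + 2) - 1) -
        (k + 2 : ℂ) * z ^ (k + 1) * ((k + 2 : ℂ) * z ^ (k + 1))) / (z ^ (k + 2) - 1) ^ 2) z :=
    hg.congr_of_eventuallyEq hev
  have hd := hf.unique hf2
  have hsum : ∑ ζ ∈ nthRootsFinset (k + 2) (1 : ℂ), ((z - ζ) ^ 2)⁻¹ =
      -∑ ζ ∈ nthRootsFinset (k + 2) (1 : ℂ), -1 / (z - ζ) ^ 2 := by
    rw [← Finset.sum_neg_distrib]
    apply Finset.sum_congr rfl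
    intro ζ hζ
    field_simp
  rw [hsum, hd]
  field_simp
  ring

private lemma root_ne_zero' {m : ℕ} (hm : 0 < m) {ζ : ℂ} (hζ : ζ ∈ nthRootsFinset m (1 : ℂ)) :
    ζ ≠ 0 := by
  intro h
  have h1 := (mem_nthRootsFinset hm (1 : ℂ)).1 hζ
  rw [h, zero_pow hm.ne'] at h1
  exact zero_ne_one h1

private lemma key_sum (k : ℕ) (z : ℂ) (hz : z ^ (k + 2) ≠ 1) :
    ∑ ζ ∈ nthRootsFinset (k + 2) (1 : ℂ), ζ * z / (ζ * z - 1) ^ 2 =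
      (k + 2 : ℂ) ^ 2 * z ^ (k + 2) / (z ^ (k + 2) - 1) ^ 2 := by
  classical
  have hm : 0 < k + 2 := by omega
  have hne : z ^ (k + 2) - 1 ≠ 0 := sub_ne_zero.2 hz
  have hinv : ∑ ζ ∈ nthRootsFinset (k + 2) (1 : ℂ), ζ * z / (ζ * z - 1) ^ 2 =
      ∑ ζ ∈ nthRootsFinset (k + 2) (1 : ℂ), ζ⁻¹ * z / (ζ⁻¹ * z - 1) ^ 2 := by
    apply Finset.sum_nbij' (fun ζ => ζ⁻¹) (fun ζ => ζ⁻¹)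
    · intro ζ hζ
      rw [mem_nthRootsFinset hm] at hζ ⊢
      rw [inv_pow, hζ, inv_one]
    · intro ζ hζ
      rw [mem_nthRootsFinset hm] at hζ ⊢
      rw [inv_pow, hζ, inv_one]
    · intro ζ hζ; rw [inv_inv]
    · intro ζ hζ; rw [inv_inv]
    · intro ζ hζ; rw [inv_inv]
  rw [hinv]
  have hterm : ∀ ζ ∈ nthRootsFinset (k + 2) (1 : ℂ),
      ζ⁻¹ * z / (ζ⁻¹ * z - 1) ^ 2 = z ^ 2 * ((z - ζ) ^ 2)⁻¹ - z * (z - ζ)⁻¹ := by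
    intro ζ hζ
    have h0 : ζ ≠ 0 := root_ne_zero' hm hζ
    have h1 : z - ζ ≠ 0 := sub_root_ne (k + 2) hm hz hζ
    have h2 : ζ⁻¹ * z - 1 = ζ⁻¹ * (z - ζ) := by field_simp
    rw [h2, mul_pow]
    field_simp
    ring
  rw [Finset.sum_congr rfl hterm, Finset.sum_sub_distrib, ← Finset.mul_sum, ← Finset.mul_sum,
    sum_inv_sq k z hz, sum_inv_sub (k + 2) hm z hz]
  have h3 : (k + 2 : ℕ) - 1 = k + 1 := by omega
  rw [h3]
  push_cast
  field_simp
  ring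

private lemma nthRootsFinset_eq_image (m : ℕ) (hm : 0 < m) :
    nthRootsFinset m (1 : ℂ) =
      (Finset.range m).image (fun s => Complex.exp (2 * Real.pi * I / m) ^ s) := by
  classical
  have hprim := Complex.isPrimitiveRoot_exp m hm.ne'
  symm
  apply Finset.eq_of_subset_of_card_le
  · intro ζ hζ
    rw [Finset.mem_image] at hζ
    obtain ⟨s, _, rfl⟩ := hζ
    rw [mem_nthRootsFinset hm, ← pow_mul, mul_comm s m, pow_mul, hprim.pow_eq_one, one_pow]
  · rw [hprim.card_nthRootsFinset, Finset.card_image_of_injOn, Finset.card_range]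
    intro a ha b hb h
    exact hprim.pow_inj (Finset.mem_range.1 ha) (Finset.mem_range.1 hb) h

private lemma sin_half_sq (θ : ℝ) : Real.sin (θ / 2) ^ 2 = 1 / 2 - Real.cos θ / 2 := by
  have h := Real.sin_sq_eq_half_sub (θ / 2)
  rwa [(by ring : 2 * (θ / 2) = θ)] at h

private lemma exp_div_sq (θ : ℝ) (h : Real.cos θ ≠ 1) :
    Complex.exp (θ * I) / (Complex.exp (θ * I) - 1) ^ 2 =
      (((2 * Real.cos θ - 2 : ℝ) : ℂ))⁻¹ := by
  have hne : Complex.exp (θ * I) - 1 ≠ 0 := by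
    intro h0
    rw [sub_eq_zero] at h0
    apply h
    have := congrArg Complex.re h0
    rwa [Complex.exp_ofReal_mul_I_re, Complex.one_re] at this
  have hc : ((Real.cos θ : ℝ) : ℂ) = (Complex.exp (θ * I) + (Complex.exp (θ * I))⁻¹) / 2 := by
    rw [Complex.ofReal_cos, Complex.cos, ← Complex.exp_neg, neg_mul]
  have hr : ((2 * Real.cos θ - 2 : ℝ) : ℂ) =
      (Complex.exp (θ * I) - 1) ^ 2 / Complex.exp (θ * I) := by
    rw [show ((2 * Real.cos θ - 2 : ℝ) : ℂ) = 2 * ((Real.cos θ : ℝ) : ℂ) - 2 by push_cast; ring,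
      hc]
    field_simp [Complex.exp_ne_zero]
    ring
  rw [hr, inv_div]

end Aux

/-- For every `m ≥ 1` and real `x` with `sin(mx/2) ≠ 0`,
`Σ_{s=0}^{m-1} 1/sin²((x + 2πs/m)/2) = m²/sin²(mx/2)`. -/
theorem stmt7 (m : ℕ) (hm : 1 ≤ m) (x : ℝ) (hx : Real.sin (m * x / 2) ≠ 0) :
    ∑ s ∈ Finset.range m, 1 / Real.sin ((x + 2 * Real.pi * s / m) / 2) ^ 2 =
      (m : ℝ) ^ 2 / Real.sin (m * x / 2) ^ 2 := by
  rcases eq_or_lt_of_le hm with h1 | h2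
  · subst h1  -- wrong direction? handle below
    simp
  · obtain ⟨k, rfl⟩ : ∃ k, m = k + 2 := ⟨m - 2, by omega⟩
    set M : ℕ := k + 2 with hM
    have hMpos : 0 < M := by omega
    have hMR : ((M : ℕ) : ℝ) ≠ 0 := by positivity
    -- each half-angle sine is nonzero
    have hsin : ∀ s ∈ Finset.range M, Real.sin ((x + 2 * Real.pi * s / M) / 2) ≠ 0 := by
      intro s hs h0
      rw [Real.sin_eq_zero_iff] at h0
      obtain ⟨n, hn⟩ := h0
      apply hx
      have hx2 : x = 2 * (n : ℝ) * Real.pi - 2 * Real.pi * s / M := by linarith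
      have hxeq : ((M : ℕ) : ℝ) * x / 2 = (((M : ℕ) * n - s : ℤ) : ℝ) * Real.pi := by
        rw [hx2]
        push_cast
        field_simp
      rw [hxeq]
      exact Real.sin_int_mul_pi _
    have hcos : ∀ s ∈ Finset.range M, Real.cos (x + 2 * Real.pi * s / M) ≠ 1 := by
      intro s hs h1c
      apply hsin s hs
      have h2c : Real.sin ((x + 2 * Real.pi * s / M) / 2) ^ 2 = 0 := by
        rw [sin_half_sq, h1c]; ring
      exact pow_eq_zero_iff (by norm_num) |>.1 h2c
    have hcosm : Real.cos (((M : ℕ) : ℝ) * x) ≠ 1 := by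
      intro h1c
      apply hx
      have h2c : Real.sin (((M : ℕ) : ℝ) * x / 2) ^ 2 = 0 := by
        rw [sin_half_sq, h1c]; ring
      exact pow_eq_zero_iff (by norm_num) |>.1 h2c
    -- complex setup
    set z : ℂ := Complex.exp (x * Complex.I) with hz
    set ω : ℂ := Complex.exp (2 * Real.pi * Complex.I / M) with hω
    have hws : ∀ s : ℕ, ω ^ s * z =
        Complex.exp (((x + 2 * Real.pi * s / M : ℝ)) * Complex.I) := by
      intro s
      rw [hω, hz, ← Complex.exp_nat_mul, ← Complex.exp_add]
      congr 1
      push_cast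
      field_simp
      ring
    have hzM : z ^ M = Complex.exp (Complex.ofReal (((M : ℕ) : ℝ) * x) * Complex.I) := by
      rw [hz, ← Complex.exp_nat_mul]
      congr 1
      push_cast
      ring
    have hzm : z ^ M ≠ 1 := by
      intro h0
      apply hcosm
      rw [hzM] at h0
      have := congrArg Complex.re h0
      rwa [Complex.exp_ofReal_mul_I_re, Complex.one_re] at this
    -- apply the key complex identity
    have hsum := key_sum k z hzm
    rw [show k + 2 = M from rfl] at hsum
    rw [nthRootsFinset_eq_image M hMpos, Finset.sum_image (by
      intro a ha b hb h
      exact (Complex.isPrimitiveRoot_exp M hMpos.ne').pow_inj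
        (Finset.mem_range.1 ha) (Finset.mem_range.1 hb) h)] at hsum
    have hterms : ∀ s ∈ Finset.range M,
        ω ^ s * z / (ω ^ s * z - 1) ^ 2 =
          (((2 * Real.cos (x + 2 * Real.pi * s / M) - 2 : ℝ) : ℂ))⁻¹ := by
      intro s hs
      rw [hws s]
      exact exp_div_sq _ (hcos s hs)
    rw [Finset.sum_congr rfl hterms] at hsum
    have hrhs : ((M : ℂ)) ^ 2 * z ^ M / (z ^ M - 1) ^ 2 =
        ((M : ℂ)) ^ 2 * (((2 * Real.cos (((M : ℕ) : ℝ) * x) - 2 : ℝ) : ℂ))⁻¹ := by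
      rw [mul_div_assoc, hzM, exp_div_sq _ hcosm]
    rw [show ((k : ℂ) + 2) = ((M : ℕ) : ℂ) by rw [hM]; push_cast; ring] at hsum
    rw [hrhs] at hsum
    -- descend to the reals
    have hreal : ∑ s ∈ Finset.range M, (2 * Real.cos (x + 2 * Real.pi * s / M) - 2)⁻¹ =
        ((M : ℕ) : ℝ) ^ 2 * (2 * Real.cos (((M : ℕ) : ℝ) * x) - 2)⁻¹ := by
      have := hsum
      exact_mod_cast this
    -- final real computation
    have hterm2 : ∀ s ∈ Finset.range M,
        1 / Real.sin ((x + 2 * Real.pi * s / M) / 2) ^ 2 =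
          (-4) * (2 * Real.cos (x + 2 * Real.pi * s / M) - 2)⁻¹ := by
      intro s hs
      have hc := hcos s hs
      rw [sin_half_sq]
      set c : ℝ := Real.cos (x + 2 * Real.pi * s / M) with hcdef
      have hne1 : (1 : ℝ) / 2 - c / 2 ≠ 0 := by intro h0; apply hc; linarith
      have hne2 : 2 * c - 2 ≠ 0 := by intro h0; apply hc; linarith
      have hne3 : 1 - c ≠ 0 := by intro h0; apply hc; linarith
      field_simp
      ring
    rw [Finset.sum_congr rfl hterm2, ← Finset.mul_sum, hreal]
    rw [show ((M : ℕ) : ℝ) * x / 2 = (((M : ℕ) : ℝ) * x) / 2 by ring, sin_half_sq]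
    set C : ℝ := Real.cos (((M : ℕ) : ℝ) * x) with hCdef
    have hne1 : (1 : ℝ) / 2 - C / 2 ≠ 0 := by intro h0; apply hcosm; linarith
    have hne2 : 2 * C - 2 ≠ 0 := by intro h0; apply hcosm; linarith
    have hne3 : 1 - C ≠ 0 := by intro h0; apply hcosm; linarith
    field_simp
    ring
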